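/- Let ℓ ≥ 1 be a natural number and let j be a natural number with 1 ≤ j < 2^ℓ. Then the binomial coefficient C(2^ℓ + j − 1, 2j − 1) is even. -/

import Mathlib

lemma aux_mod_two_pow {a t : ℕ} (h1 : 2 ^ t ∣ a) (h2 : ¬ 2 ^ (t + 1) ∣ a) :
    a % 2 ^ (t + 1) = 2 ^ t := by
  have hd : 2 ^ t ∣ a % 2 ^ (t + 1) :=
    (Nat.dvd_mod_iff (by rw [pow_succ]; exact Dvd.intro 2 rfl)).2 h1
  have hlt : a % 2 ^ (t + 1) < 2 ^ (t + 1) := Nat.mod_lt _ (Nat.pow_pos (by norm_num))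
  have hne : a % 2 ^ (t + 1) ≠ 0 := by
    intro h
    exact h2 ((Nat.dvd_mod_iff dvd_rfl).1 (h ▸ dvd_zero _))
  obtain ⟨s, hs⟩ := hd
  rw [hs, pow_succ] at hlt
  have hs2 : s < 2 := by
    by_contra hc
    push_neg at hc
    exact absurd (Nat.mul_le_mul_left (2 ^ t) hc) (by omega)
  have hs0 : s ≠ 0 := fun h => hne (by rw [hs, h, mul_zero])
  have : s = 1 := by omega
  rw [hs, this, mul_one]

/-- For `ℓ ≥ 1` and `1 ≤ j < 2^ℓ`, the binomial coefficient `C(2^ℓ + j - 1, 2j - 1)`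
is even. -/
theorem stmt_8 (ℓ j : ℕ) (hℓ : 1 ≤ ℓ) (hj1 : 1 ≤ j) (hj2 : j < 2 ^ ℓ) :
    Even (Nat.choose (2 ^ ℓ + j - 1) (2 * j - 1)) := by
  haveI : Fact (Nat.Prime 2) := ⟨Nat.prime_two⟩
  set t := padicValNat 2 j with ht
  have hjne : j ≠ 0 := by omega
  have hdvd : 2 ^ t ∣ j := pow_padicValNat_dvd
  have hndvd : ¬ 2 ^ (t + 1) ∣ j := pow_succ_padicValNat_not_dvd hjne
  have hps : 2 ^ (t + 1) = 2 * 2 ^ t := by rw [pow_succ]; ring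
  have h2t : 2 ^ t ≤ j := Nat.le_of_dvd (by omega) hdvd
  have htl : t < ℓ := by
    have := lt_of_le_of_lt h2t hj2
    exact (Nat.pow_lt_pow_iff_right (by norm_num)).1 this
  set n := 2 ^ ℓ + j - 1 with hn
  set k := 2 * j - 1 with hk
  have hkn : k ≤ n := by omega
  have hnk : n - k = 2 ^ ℓ - j := by omega
  -- carry at position t+1
  have hkmod : k % 2 ^ (t + 1) = 2 ^ (t + 1) - 1 := by
    obtain ⟨q, hq⟩ : 2 ^ (t + 1) ∣ 2 * j := by
      rw [pow_succ, mul_comm (2 ^ t) 2]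
      exact mul_dvd_mul_left 2 hdvd
    have hq1 : 1 ≤ q := by
      rcases Nat.eq_zero_or_pos q with h | h
      · rw [h, mul_zero] at hq; omega
      · exact h
    have : k = 2 ^ (t + 1) * (q - 1) + (2 ^ (t + 1) - 1) := by
      have h2 : 1 ≤ 2 ^ (t + 1) := Nat.one_le_two_pow
      have : 2 ^ (t + 1) * q = 2 ^ (t + 1) * (q - 1) + 2 ^ (t + 1) := by
        rw [← Nat.mul_succ]; congr 1; omega
      omega
    rw [this, Nat.mul_add_mod, Nat.mod_eq_of_lt (by omega)]
  have hnkmod : (n - k) % 2 ^ (t + 1) = 2 ^ t := by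
    rw [hnk]
    apply aux_mod_two_pow
    · exact Nat.dvd_sub (pow_dvd_pow 2 htl.le) hdvd
    · intro h
      exact hndvd (by
        have h1 : 2 ^ (t + 1) ∣ 2 ^ ℓ := pow_dvd_pow 2 (by omega)
        have := Nat.dvd_sub h1 h
        rwa [Nat.sub_sub_self (le_of_lt hj2)] at this)
  have hcarry : 2 ^ (t + 1) ≤ k % 2 ^ (t + 1) + (n - k) % 2 ^ (t + 1) := by
    rw [hkmod, hnkmod]
    have : 1 ≤ 2 ^ t := Nat.one_le_two_pow
    omega
  -- bound for log
  have hlog : Nat.log 2 n < ℓ + 1 := by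
    apply Nat.log_lt_of_lt_pow (by omega)
    have : 2 ^ (ℓ + 1) = 2 ^ ℓ + 2 ^ ℓ := by rw [pow_succ]; ring
    omega
  rw [even_iff_two_dvd, ← pow_one 2, pow_dvd_iff_le_emultiplicity,
    Nat.Prime.emultiplicity_choose Nat.prime_two hkn hlog]
  have hmem : t + 1 ∈ Finset.filter
      (fun i => 2 ^ i ≤ k % 2 ^ i + (n - k) % 2 ^ i) (Finset.Ico 1 (ℓ + 1)) := by
    simp only [Finset.mem_filter, Finset.mem_Ico]
    exact ⟨⟨by omega, by omega⟩, hcarry⟩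
  have hcard : 1 ≤ (Finset.filter
      (fun i => 2 ^ i ≤ k % 2 ^ i + (n - k) % 2 ^ i) (Finset.Ico 1 (ℓ + 1))).card :=
    Finset.card_pos.2 ⟨t + 1, hmem⟩
  exact_mod_cast Nat.one_le_cast.2 hcard
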